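/- Let H be a Hermitian d×d matrix that is not a real multiple of the identity. Then there exist unitaries U_1, …, U_{d²−1} ∈ U(d) such that the matrices U_j (H − (tr H/d)I) U_j†, j = 1,…,d²−1, are linearly independent over ℝ. -/

import Mathlib

open Matrix

/-- Linear independence from a dual family. -/
private lemma linearIndependent_of_dual_family {ι M : Type*} [Fintype ι] [DecidableEq ι]
    [AddCommGroup M] [Module ℝ M] (v : ι → M) (φ : ι → M →ₗ[ℝ] ℝ)
    (h : ∀ i j, φ i (v j) = if i = j then 1 else 0) : LinearIndependent ℝ v := by
  rw [Fintype.linearIndependent_iff]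
  intro g hg i
  have := congrArg (φ i) hg
  simpa [map_sum, _root_.map_smul, h, Finset.sum_ite_eq, mul_ite] using this

private lemma aux_conj_conj {R : Type*} [Monoid R] [StarMul R] (A B M : R)
    (h1 : star B * B = 1) :
    (A * star B) * (B * M * star B) * star (A * star B) = A * M * star A := by
  simp only [StarMul.star_mul, star_star, ← mul_assoc]
  rw [mul_assoc A (star B) B, h1, mul_one, mul_assoc (A * M) (star B) B, h1, mul_one]

private lemma star_stdBasisMatrix {d : ℕ} (i j : Fin d) (c : ℂ) :
    star (single i j c) = single j i (star c) := by
  ext a b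
  simp only [Matrix.star_apply, single, of_apply]
  split_ifs with h1 h2 h2 <;> simp_all [and_comm]

set_option maxHeartbeats 2000000 in
theorem exists_linearIndependent_conjugates (d : ℕ) (H : Matrix (Fin d) (Fin d) ℂ)
    (hH : H.IsHermitian) (hnI : ∀ c : ℝ, H ≠ (c : ℂ) • 1) :
    ∃ U : Fin (d ^ 2 - 1) → Matrix.unitaryGroup (Fin d) ℂ,
      LinearIndependent ℝ (fun j =>
        (U j : Matrix (Fin d) (Fin d) ℂ) * (H - (H.trace / d) • 1) *
          star (U j : Matrix (Fin d) (Fin d) ℂ)) := by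
  classical
  rcases Nat.eq_zero_or_pos d with hd | hd
  · exfalso
    apply hnI 0
    subst hd
    ext i j
    exact i.elim0
  set H₀ : Matrix (Fin d) (Fin d) ℂ := H - (H.trace / d) • 1 with hH₀def
  -- trace of H is real
  have htr : star H.trace = H.trace := by
    rw [← Matrix.trace_conjTranspose, hH.eq]
  obtain ⟨r, hr⟩ : ∃ r : ℝ, H.trace = (r : ℂ) :=
    ⟨H.trace.re, by
      have := Complex.conj_eq_iff_re.mp htr
      exact this.symm⟩
  -- H₀ is Hermitian
  have hH₀ : H₀.IsHermitian := by
    rw [Matrix.IsHermitian, hH₀def, Matrix.conjTranspose_sub, Matrix.conjTranspose_smul,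
      Matrix.conjTranspose_one, hH.eq]
    congr 1
    rw [star_div₀, htr, star_natCast]
  -- H₀ is not a real multiple of 1
  have hH₀nI : ∀ c : ℝ, H₀ ≠ (c : ℂ) • 1 := by
    intro c hc
    apply hnI (c + r / d)
    have hHrw : H = H₀ + (H.trace / d) • 1 := by rw [hH₀def]; abel
    rw [hHrw, hc, hr, ← add_smul]
    congr 1
    push_cast
    ring
  set μ : Fin d → ℝ := hH₀.eigenvalues with hμdef
  set u := hH₀.eigenvectorUnitary with hudef
  set D : Matrix (Fin d) (Fin d) ℂ := diagonal (fun i => (μ i : ℂ)) with hDdef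
  have hspec : H₀ = (u : Matrix (Fin d) (Fin d) ℂ) * D * star (u : Matrix (Fin d) (Fin d) ℂ) :=
    hH₀.spectral_theorem
  set f : Matrix.unitaryGroup (Fin d) ℂ → Matrix (Fin d) (Fin d) ℂ :=
    fun U => (U : Matrix (Fin d) (Fin d) ℂ) * H₀ * star (U : Matrix (Fin d) (Fin d) ℂ)
    with hfdef
  set W : Submodule ℝ (Matrix (Fin d) (Fin d) ℂ) := Submodule.span ℝ (Set.range f) with hWdef
  -- conjugates of D are in W
  have hconjD : ∀ V : Matrix.unitaryGroup (Fin d) ℂ,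
      (V : Matrix (Fin d) (Fin d) ℂ) * D * star (V : Matrix (Fin d) (Fin d) ℂ) ∈ W := by
    intro V
    have key : f (V * u⁻¹) =
        (V : Matrix (Fin d) (Fin d) ℂ) * D * star (V : Matrix (Fin d) (Fin d) ℂ) := by
      simp only [hfdef, Matrix.UnitaryGroup.mul_val, Matrix.UnitaryGroup.inv_val, hspec]
      exact aux_conj_conj _ _ _ (Matrix.UnitaryGroup.star_mul_self u)
    rw [← key]
    exact Submodule.subset_span ⟨V * u⁻¹, rfl⟩
  -- W is invariant under unitary conjugation
  have hconjW : ∀ (V : Matrix.unitaryGroup (Fin d) ℂ) (M : Matrix (Fin d) (Fin d) ℂ),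
      M ∈ W → (V : Matrix (Fin d) (Fin d) ℂ) * M * star (V : Matrix (Fin d) (Fin d) ℂ) ∈ W := by
    intro V M hM
    induction hM using Submodule.span_induction with
    | mem x hx =>
      obtain ⟨U, rfl⟩ := hx
      refine Submodule.subset_span ⟨V * U, ?_⟩
      simp only [hfdef, Matrix.UnitaryGroup.mul_val, Matrix.star_mul, Matrix.mul_assoc]
    | zero => simpa using W.zero_mem
    | add x y _ _ hx hy =>
      have := W.add_mem hx hy
      rwa [← Matrix.add_mul, ← Matrix.mul_add] at this
    | smul c x _ hx =>
      have := W.smul_mem c hx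
      rwa [← smul_mul_assoc, ← mul_smul_comm] at this
  -- permutation matrices
  have hPstar : ∀ σ : Equiv.Perm (Fin d),
      star (σ.permMatrix ℂ) = Equiv.Perm.permMatrix ℂ σ.symm := by
    intro σ
    ext i j
    by_cases h : i = σ j
    · subst h
      simp [Matrix.star_apply, PEquiv.toMatrix_apply, Equiv.toPEquiv_apply,
        Equiv.symm_apply_apply]
    · have h2 : ¬ j = σ.symm i := fun hc => h (by rw [hc, Equiv.apply_symm_apply])
      have h3 : ¬ σ j = i := fun hc => h hc.symm
      have h4 : ¬ (Equiv.symm σ) i = j := fun hc => h2 hc.symm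
      simp [Matrix.star_apply, PEquiv.toMatrix_apply, Equiv.toPEquiv_apply,
        Option.mem_def, h3, h4]
  have hPu : ∀ σ : Equiv.Perm (Fin d), σ.permMatrix ℂ ∈ Matrix.unitaryGroup (Fin d) ℂ := by
    intro σ
    rw [Matrix.mem_unitaryGroup_iff, hPstar, ← PEquiv.toMatrix_trans, ← Equiv.toPEquiv_trans,
      Equiv.self_trans_symm]
    simp
  have hdiagconj : ∀ (σ : Equiv.Perm (Fin d)) (v : Fin d → ℂ),
      (σ.permMatrix ℂ) * diagonal v * star (σ.permMatrix ℂ) =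
        diagonal (fun i => v (σ i)) := by
    intro σ v
    rw [hPstar, PEquiv.toMatrix_toPEquiv_mul, PEquiv.mul_toMatrix_toPEquiv]
    ext i j
    by_cases h : i = j
    · simp [h, Matrix.diagonal_apply]
    · have hne : ¬ σ i = σ j := fun hc => h (σ.injective hc)
      simp [Matrix.diagonal_apply, h, hne]
  have hdiag_mem : ∀ σ : Equiv.Perm (Fin d),
      diagonal (fun i => ((μ (σ i)) : ℂ)) ∈ W := by
    intro σ
    have := hconjD ⟨σ.permMatrix ℂ, hPu σ⟩
    rwa [hdiagconj σ (fun i => ((μ i) : ℂ))] at this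
  -- existence of two distinct eigenvalues
  have hex : ∃ i j, μ i ≠ μ j := by
    by_contra hc
    push_neg at hc
    set i0 : Fin d := ⟨0, hd⟩
    apply hH₀nI (μ i0)
    have hD : D = ((μ i0 : ℝ) : ℂ) • 1 := by
      ext i j
      by_cases h : i = j
      · subst h; simp [hDdef, Matrix.one_apply, hc i i0]
      · simp [hDdef, h, Matrix.diagonal_apply, Matrix.one_apply]
    rw [hspec, hD, mul_smul_comm, smul_mul_assoc, Matrix.mul_one,
      Matrix.mem_unitaryGroup_iff.mp u.2]
  obtain ⟨i0, j0, hij⟩ := hex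
  have hi0j0 : i0 ≠ j0 := fun h => hij (by rw [h])
  -- generators: diagonal differences
  have gen_diag : ∀ k l : Fin d, k ≠ l →
      single k k (1 : ℂ) - single l l (1 : ℂ) ∈ W := by
    intro k l hkl
    set τ := Equiv.swap k i0 with hτ
    set l' := τ l with hl'
    have hl'i : l' ≠ i0 := by
      rw [hl', ← Equiv.swap_apply_left k i0, ← hτ]
      exact fun h => hkl.symm (τ.injective h)
    set ρ := Equiv.swap l' j0 with hρ
    set σ := τ.trans ρ with hσ
    have hσk : σ k = i0 := by
      rw [hσ, Equiv.trans_apply, hτ, Equiv.swap_apply_left, hρ,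
        Equiv.swap_apply_of_ne_of_ne hl'i.symm hi0j0]
    have hσl : σ l = j0 := by
      rw [hσ, Equiv.trans_apply, ← hl', hρ, Equiv.swap_apply_left]
    set σ' := (Equiv.swap k l).trans σ with hσ'
    have h1 := hdiag_mem σ
    have h2 := hdiag_mem σ'
    have key : diagonal (fun x => ((μ (σ x)) : ℂ)) - diagonal (fun x => ((μ (σ' x)) : ℂ)) =
        (μ i0 - μ j0 : ℝ) • (single k k (1 : ℂ) - single l l (1 : ℂ)) := by
      ext a b
      by_cases hab : a = b
      · subst hab
        by_cases hak : a = k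
        · subst hak
          have hσ'a : σ' a = j0 := by
            rw [hσ', Equiv.trans_apply, Equiv.swap_apply_left, hσl]
          simp [Matrix.diagonal_apply, hσ'a, hσk, Ne.symm hkl, hkl,
            Complex.real_smul]
        · by_cases hal : a = l
          · subst hal
            have hσ'a : σ' a = i0 := by
              rw [hσ', Equiv.trans_apply, Equiv.swap_apply_right, hσk]
            simp [Matrix.diagonal_apply, hσ'a, hσl, hkl, Ne.symm hkl, hak,
              Complex.real_smul]
          · have hσ'a : σ' a = σ a := by
              rw [hσ', Equiv.trans_apply, Equiv.swap_apply_of_ne_of_ne hak hal]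
            simp [Matrix.diagonal_apply, hσ'a,
              Matrix.single_apply_of_row_ne (Ne.symm hak),
              Matrix.single_apply_of_row_ne (Ne.symm hal)]
      · simp [Matrix.diagonal_apply, hab,
          Matrix.single_apply_of_ne _ _ _ _ _ (fun hc : k = a ∧ k = b => hab (hc.1.symm.trans hc.2)),
          Matrix.single_apply_of_ne _ _ _ _ _ (fun hc : l = a ∧ l = b => hab (hc.1.symm.trans hc.2))]
    have hsub := W.sub_mem h1 h2
    rw [key] at hsub
    have := W.smul_mem ((μ i0 - μ j0)⁻¹ : ℝ) hsub
    rwa [smul_smul, inv_mul_cancel₀ (sub_ne_zero.mpr hij), one_smul] at this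
  -- generators: symmetric off-diagonal
  have gen_S : ∀ k l : Fin d, k ≠ l →
      single k l (1 : ℂ) + single l k (1 : ℂ) ∈ W := by
    intro k l hkl
    have hkl' : l ≠ k := hkl.symm
    set A := single k k (1 : ℂ) with hA
    set B := single k l (1 : ℂ) with hB
    set C := single l k (1 : ℂ) with hC
    set F := single l l (1 : ℂ) with hF
    -- multiplication table
    have tAA : A * A = A := by rw [hA]; simp
    have tAB : A * B = B := by rw [hA, hB]; simp
    have tAC : A * C = 0 := by rw [hA, hC]; exact Matrix.single_mul_single_of_ne _ _ _ _ hkl _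
    have tAF : A * F = 0 := by rw [hA, hF]; exact Matrix.single_mul_single_of_ne _ _ _ _ hkl _
    have tBA : B * A = 0 := by rw [hB, hA]; exact Matrix.single_mul_single_of_ne _ _ _ _ hkl' _
    have tBB : B * B = 0 := by rw [hB]; exact Matrix.single_mul_single_of_ne _ _ _ _ hkl' _
    have tBC : B * C = A := by rw [hB, hC, hA]; simp
    have tBF : B * F = B := by rw [hB, hF]; simp
    have tCA : C * A = C := by rw [hC, hA]; simp
    have tCB : C * B = F := by rw [hC, hB, hF]; simp
    have tCC : C * C = 0 := by rw [hC]; exact Matrix.single_mul_single_of_ne _ _ _ _ hkl _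
    have tCF : C * F = 0 := by rw [hC, hF]; exact Matrix.single_mul_single_of_ne _ _ _ _ hkl _
    have tFA : F * A = 0 := by rw [hF, hA]; exact Matrix.single_mul_single_of_ne _ _ _ _ hkl' _
    have tFB : F * B = 0 := by rw [hF, hB]; exact Matrix.single_mul_single_of_ne _ _ _ _ hkl' _
    have tFC : F * C = C := by rw [hF, hC]; simp
    have tFF : F * F = F := by rw [hF]; simp
    set V : Matrix (Fin d) (Fin d) ℂ :=
      1 - A - F + (3/5 : ℂ) • (A - F) + (4/5 : ℂ) • (B + C) with hV
    have hVstar : star V = V := by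
      rw [hV]
      simp only [star_add, star_sub, star_one, star_smul, hA, hB, hC, hF,
        star_stdBasisMatrix, star_one]
      rw [show star (3/5 : ℂ) = 3/5 by norm_num [Complex.ext_iff],
        show star (4/5 : ℂ) = 4/5 by norm_num [Complex.ext_iff]]
      module
    have hVu : V ∈ Matrix.unitaryGroup (Fin d) ℂ := by
      rw [Matrix.mem_unitaryGroup_iff, hVstar, hV]
      simp only [mul_add, add_mul, mul_sub, sub_mul, mul_one, one_mul,
        smul_mul_assoc, mul_smul_comm, tAA, tAB, tAC, tAF, tBA, tBB, tBC, tBF,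
        tCA, tCB, tCC, tCF, tFA, tFB, tFC, tFF, smul_smul,
        smul_zero, sub_zero, zero_sub, add_zero, zero_add, smul_add, smul_sub,
        neg_mul, mul_neg, neg_neg, smul_neg, neg_add, neg_sub]
      match_scalars <;> ring
    have hVconj : V * (A - F) * star V =
        (-7/25 : ℂ) • (A - F) + (24/25 : ℂ) • (B + C) := by
      rw [hVstar, hV]
      simp only [mul_add, add_mul, mul_sub, sub_mul, mul_one, one_mul,
        smul_mul_assoc, mul_smul_comm, tAA, tAB, tAC, tAF, tBA, tBB, tBC, tBF,
        tCA, tCB, tCC, tCF, tFA, tFB, tFC, tFF, smul_smul,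
        smul_zero, sub_zero, zero_sub, add_zero, zero_add, smul_add, smul_sub,
        neg_mul, mul_neg, neg_neg, smul_neg, neg_add, neg_sub]
      match_scalars <;> ring
    have hmem1 := hconjW ⟨V, hVu⟩ (A - F) (gen_diag k l hkl)
    rw [hVconj] at hmem1
    have hmem2 := W.smul_mem (25/24 : ℝ) hmem1
    have hmem3 := W.smul_mem (7/24 : ℝ) (gen_diag k l hkl)
    have hsum := W.add_mem hmem2 hmem3
    have hfinal : (25/24 : ℝ) • ((-7/25 : ℂ) • (A - F) + (24/25 : ℂ) • (B + C)) +
        (7/24 : ℝ) • (A - F) = B + C := by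
      rw [hA, hB, hC, hF]
      match_scalars <;> norm_num
    rwa [hfinal] at hsum
  -- generators: antisymmetric off-diagonal
  have gen_T : ∀ k l : Fin d, k ≠ l →
      Complex.I • single k l (1 : ℂ) - Complex.I • single l k (1 : ℂ) ∈ W := by
    intro k l hkl
    have hkl' : l ≠ k := hkl.symm
    set B := single k l (1 : ℂ) with hB
    set C := single l k (1 : ℂ) with hC
    set F := single l l (1 : ℂ) with hF
    have tBF : B * F = B := by rw [hB, hF]; simp
    have tCF : C * F = 0 := by rw [hC, hF]; exact Matrix.single_mul_single_of_ne _ _ _ _ hkl _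
    have tFB : F * B = 0 := by rw [hF, hB]; exact Matrix.single_mul_single_of_ne _ _ _ _ hkl' _
    have tFC : F * C = C := by rw [hF, hC]; simp
    have tFF : F * F = F := by rw [hF]; simp
    set Wm : Matrix (Fin d) (Fin d) ℂ := 1 + (Complex.I - 1) • F with hWm
    have hWmstar : star Wm = 1 + (-Complex.I - 1) • F := by
      rw [hWm]
      simp only [star_add, star_one, star_smul, star_sub, hF, star_stdBasisMatrix, star_one]
      congr 2
      simp [Complex.star_def]
    have hWmu : Wm ∈ Matrix.unitaryGroup (Fin d) ℂ := by
      rw [Matrix.mem_unitaryGroup_iff, hWmstar, hWm]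
      simp only [mul_add, add_mul, mul_one, one_mul, smul_mul_assoc, mul_smul_comm,
        tFF, smul_smul, smul_add]
      match_scalars <;> simp [Complex.ext_iff] <;> ring_nf <;> simp [Complex.I_sq] <;> ring
    have hWconj : Wm * (B + C) * star Wm = Complex.I • C - Complex.I • B := by
      rw [hWmstar, hWm]
      simp only [mul_add, add_mul, mul_one, one_mul, smul_mul_assoc, mul_smul_comm,
        tBF, tCF, tFB, tFC, smul_smul, smul_zero, add_zero, smul_add, smul_sub]
      match_scalars <;> simp [Complex.ext_iff] <;> ring_nf <;> simp [Complex.I_sq] <;> ring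
    have hmem := hconjW ⟨Wm, hWmu⟩ (B + C) (gen_S k l hkl)
    rw [hWconj] at hmem
    have := W.neg_mem hmem
    rwa [neg_sub] at this
  -- the explicit linearly independent family
  set lst : Fin d := ⟨d - 1, by omega⟩ with hlst
  set ι := {k : Fin d // k ≠ lst} ⊕ {p : Fin d × Fin d // p.1 ≠ p.2} with hι
  set G : ι → Matrix (Fin d) (Fin d) ℂ := Sum.elim
    (fun k : {k : Fin d // k ≠ lst} =>
      single k.1 k.1 (1 : ℂ) - single lst lst (1 : ℂ))
    (fun p : {p : Fin d × Fin d // p.1 ≠ p.2} =>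
      if p.1.1 < p.1.2 then single p.1.1 p.1.2 (1 : ℂ) + single p.1.2 p.1.1 (1 : ℂ)
      else Complex.I • single p.1.1 p.1.2 (1 : ℂ) -
        Complex.I • single p.1.2 p.1.1 (1 : ℂ)) with hG
  have hGmem : ∀ i, G i ∈ W := by
    rintro (⟨k, hk⟩ | ⟨⟨k, l⟩, hkl⟩)
    · exact gen_diag k lst hk
    · replace hkl : k ≠ l := hkl
      simp only [hG, Sum.elim_inr]
      split_ifs
      · exact gen_S k l hkl
      · exact gen_T k l hkl
  -- dual family
  set entryRe : Fin d → Fin d → (Matrix (Fin d) (Fin d) ℂ →ₗ[ℝ] ℝ) := fun a b =>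
    { toFun := fun M => (M a b).re
      map_add' := by intros; simp
      map_smul' := by intros; simp [Complex.smul_re] } with hentryRe
  set entryIm : Fin d → Fin d → (Matrix (Fin d) (Fin d) ℂ →ₗ[ℝ] ℝ) := fun a b =>
    { toFun := fun M => (M a b).im
      map_add' := by intros; simp
      map_smul' := by intros; simp [Complex.smul_im] } with hentryIm
  replace hentryRe : ∀ a b M, entryRe a b M = (M a b).re := fun _ _ _ => rfl
  replace hentryIm : ∀ a b M, entryIm a b M = (M a b).im := fun _ _ _ => rfl
  set φ : ι → (Matrix (Fin d) (Fin d) ℂ →ₗ[ℝ] ℝ) := Sum.elim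
    (fun k : {k : Fin d // k ≠ lst} => entryRe k.1 k.1)
    (fun p : {p : Fin d × Fin d // p.1 ≠ p.2} =>
      if p.1.1 < p.1.2 then entryRe p.1.1 p.1.2 else entryIm p.1.1 p.1.2) with hφ
  have hdual : ∀ i j, φ i (G j) = if i = j then 1 else 0 := by
    rintro (⟨k, hk⟩ | ⟨⟨k, l⟩, hkl⟩) (⟨k', hk'⟩ | ⟨⟨a, b⟩, hab⟩)
    · -- inl / inl
      by_cases h : k = k'
      · subst h
        simp [hφ, hG, Sum.elim_inl, hentryRe, Matrix.sub_apply,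
          Matrix.single_apply_same,
          Matrix.single_apply_of_ne _ _ _ _ _ (fun hc : lst = k ∧ lst = k => hk hc.1.symm)]
      · have h2 : ¬ (k' = k ∧ k' = k) := fun hc => h (hc.1.symm)
        have h3 : ¬ (lst = k ∧ lst = k) := fun hc => hk hc.1.symm
        simp [hφ, hG, Sum.elim_inl, hentryRe, Matrix.sub_apply,
          Matrix.single_apply_of_ne _ _ _ _ _ h2,
          Matrix.single_apply_of_ne _ _ _ _ _ h3, h, Sum.inl.injEq, Subtype.mk.injEq]
        exact fun hc => h (by cases hc; rfl)
    · -- inl / inr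
      replace hab : a ≠ b := hab
      have h1 : ¬ (a = k ∧ b = k) := fun hc => hab (hc.1.trans hc.2.symm)
      have h2 : ¬ (b = k ∧ a = k) := fun hc => hab (hc.2.trans hc.1.symm)
      simp only [hφ, hG, Sum.elim_inl, Sum.elim_inr]
      split_ifs <;>
        simp [hentryRe, Matrix.add_apply, Matrix.sub_apply, Matrix.smul_apply,
          Matrix.single_apply_of_ne _ _ _ _ _ h1,
          Matrix.single_apply_of_ne _ _ _ _ _ h2] <;> tauto
    · -- inr / inl
      replace hkl : k ≠ l := hkl
      have h1 : ¬ (k' = k ∧ k' = l) := fun hc => hkl (hc.1.symm.trans hc.2)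
      have h2 : ¬ (lst = k ∧ lst = l) := fun hc => hkl (hc.1.symm.trans hc.2)
      simp only [hφ, hG, Sum.elim_inl, Sum.elim_inr]
      split_ifs <;>
        simp [hentryRe, hentryIm, Matrix.sub_apply,
          Matrix.single_apply_of_ne _ _ _ _ _ h1,
          Matrix.single_apply_of_ne _ _ _ _ _ h2] <;> tauto
    · -- inr / inr
      replace hkl : k ≠ l := hkl
      replace hab : a ≠ b := hab
      simp only [hφ, hG, Sum.elim_inl, Sum.elim_inr]
      by_cases hkl2 : k < l <;> by_cases hab2 : a < b
      · -- both symmetric type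
        by_cases he : a = k ∧ b = l
        · obtain ⟨rfl, rfl⟩ := he
          have h2 : ¬ (b = a ∧ a = b) := fun hc => hab hc.2
          simp [hkl2, hab2, hentryRe, Matrix.add_apply,
            Matrix.single_apply_same,
            Matrix.single_apply_of_ne _ _ _ _ _ h2]
        · have h2 : ¬ (b = k ∧ a = l) := by
            rintro ⟨rfl, rfl⟩
            exact absurd (hab2.trans hkl2) (lt_irrefl _)
          have hne : ¬ (Sum.inr ⟨(k, l), hkl⟩ : ι) = Sum.inr ⟨(a, b), hab⟩ := by
            simp only [Sum.inr.injEq, Subtype.mk.injEq, Prod.mk.injEq]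
            rintro ⟨rfl, rfl⟩
            exact he ⟨rfl, rfl⟩
          simp [hkl2, hab2, hentryRe, Matrix.add_apply,
            Matrix.single_apply_of_ne _ _ _ _ _ (fun hc : a = k ∧ b = l => he hc),
            Matrix.single_apply_of_ne _ _ _ _ _ h2, hne]
      · -- i symmetric, j antisymmetric: entries are purely imaginary, re = 0
        have hne : ¬ (Sum.inr ⟨(k, l), hkl⟩ : ι) = Sum.inr ⟨(a, b), hab⟩ := by
          simp only [Sum.inr.injEq, Subtype.mk.injEq, Prod.mk.injEq]
          rintro ⟨rfl, rfl⟩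
          exact hab2 hkl2
        simp only [hkl2, hab2, if_true, if_false, hentryRe, LinearMap.coe_mk, AddHom.coe_mk,
          Matrix.sub_apply, Matrix.smul_apply, hne]
        by_cases h1 : a = k ∧ b = l
        · obtain ⟨rfl, rfl⟩ := h1
          have h2 : ¬ (b = a ∧ a = b) := fun hc => hab hc.2
          simp [Matrix.single_apply_same,
            Matrix.single_apply_of_ne _ _ _ _ _ h2, Complex.smul_re]
        · by_cases h2 : b = k ∧ a = l
          · obtain ⟨hbk, hal⟩ := h2
            subst hbk; subst hal
            simp [Matrix.single_apply_same, hab, Ne.symm hab, Complex.smul_re]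
          · simp [Matrix.single_apply_of_ne _ _ _ _ _ h1,
              Matrix.single_apply_of_ne _ _ _ _ _ h2]
      · -- i antisymmetric, j symmetric: entries real, im = 0
        have hne : ¬ (Sum.inr ⟨(k, l), hkl⟩ : ι) = Sum.inr ⟨(a, b), hab⟩ := by
          simp only [Sum.inr.injEq, Subtype.mk.injEq, Prod.mk.injEq]
          rintro ⟨rfl, rfl⟩
          exact hkl2 hab2
        simp only [hkl2, hab2, if_true, if_false, hentryIm, LinearMap.coe_mk, AddHom.coe_mk,
          Matrix.add_apply, hne]
        by_cases h1 : a = k ∧ b = l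
        · obtain ⟨rfl, rfl⟩ := h1
          have h2 : ¬ (b = a ∧ a = b) := fun hc => hab hc.2
          simp [Matrix.single_apply_same,
            Matrix.single_apply_of_ne _ _ _ _ _ h2]
        · by_cases h2 : b = k ∧ a = l
          · obtain ⟨hbk, hal⟩ := h2
            subst hbk; subst hal
            simp [Matrix.single_apply_same, hab, Ne.symm hab]
          · simp [Matrix.single_apply_of_ne _ _ _ _ _ h1,
              Matrix.single_apply_of_ne _ _ _ _ _ h2]
      · -- both antisymmetric
        by_cases he : a = k ∧ b = l
        · obtain ⟨rfl, rfl⟩ := he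
          have h2 : ¬ (b = a ∧ a = b) := fun hc => hab hc.2
          simp [hkl2, hab2, hentryIm, Matrix.sub_apply, Matrix.smul_apply,
            Matrix.single_apply_same,
            Matrix.single_apply_of_ne _ _ _ _ _ h2, Complex.smul_im]
        · have h2 : ¬ (b = k ∧ a = l) := by
            rintro ⟨rfl, rfl⟩
            have h3 : a < b := lt_of_le_of_ne (not_lt.mp hkl2) hab
            have h4 : b < a := lt_of_le_of_ne (not_lt.mp hab2) (Ne.symm hab)
            exact absurd (h3.trans h4) (lt_irrefl _)
          have hne : ¬ (Sum.inr ⟨(k, l), hkl⟩ : ι) = Sum.inr ⟨(a, b), hab⟩ := by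
            simp only [Sum.inr.injEq, Subtype.mk.injEq, Prod.mk.injEq]
            rintro ⟨rfl, rfl⟩
            exact he ⟨rfl, rfl⟩
          simp [hkl2, hab2, hentryIm, Matrix.sub_apply, Matrix.smul_apply,
            Matrix.single_apply_of_ne _ _ _ _ _ (fun hc : a = k ∧ b = l => he hc),
            Matrix.single_apply_of_ne _ _ _ _ _ h2, hne]
  have hGli : LinearIndependent ℝ G := linearIndependent_of_dual_family G φ hdual
  -- cardinality of the index type
  have hcardι : Fintype.card ι = d ^ 2 - 1 := by
    have e1 : Fintype.card {k : Fin d // k ≠ lst} = d - 1 := by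
      calc Fintype.card {k : Fin d // k ≠ lst}
          = Fintype.card (Fin d) - Fintype.card {k : Fin d // k = lst} :=
            Fintype.card_subtype_compl _
        _ = d - 1 := by rw [Fintype.card_subtype_eq, Fintype.card_fin]
    have e2 : Fintype.card {p : Fin d × Fin d // p.1 = p.2} = d := by
      have eqv : {p : Fin d × Fin d // p.1 = p.2} ≃ Fin d :=
        { toFun := fun p => p.1.1
          invFun := fun k => ⟨(k, k), rfl⟩
          left_inv := fun p => by
            obtain ⟨⟨x, y⟩, h⟩ := p
            cases h
            rfl
          right_inv := fun k => rfl }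
      rw [Fintype.card_congr eqv, Fintype.card_fin]
    have e3 : Fintype.card {p : Fin d × Fin d // p.1 ≠ p.2} = d * d - d := by
      calc Fintype.card {p : Fin d × Fin d // p.1 ≠ p.2}
          = Fintype.card (Fin d × Fin d) - Fintype.card {p : Fin d × Fin d // p.1 = p.2} :=
            Fintype.card_subtype_compl _
        _ = d * d - d := by rw [e2, Fintype.card_prod, Fintype.card_fin]
    have hsum : Fintype.card ι = (d - 1) + (d * d - d) := by
      rw [show Fintype.card ι =
          Fintype.card ({k : Fin d // k ≠ lst} ⊕ {p : Fin d × Fin d // p.1 ≠ p.2}) from rfl,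
        Fintype.card_sum, e1, e3]
    rw [hsum, pow_two]
    have hdd : d ≤ d * d := Nat.le_mul_of_pos_left d hd
    omega
  -- the span has dimension at least d^2 - 1
  haveI : FiniteDimensional ℝ (Matrix (Fin d) (Fin d) ℂ) := by infer_instance
  have hGli' : LinearIndependent ℝ (fun i => (⟨G i, hGmem i⟩ : W)) := by
    apply LinearIndependent.of_comp W.subtype
    exact hGli
  have hfinrank : d ^ 2 - 1 ≤ Module.finrank ℝ W := by
    rw [← hcardι]
    exact hGli'.fintype_card_le_finrank
  -- extract a linearly independent subfamily of the orbit
  obtain ⟨s, hs_sub, hs_span, hs_li⟩ := exists_linearIndependent ℝ (Set.range f)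
  have hsfin : s.Finite := hs_li.setFinite
  haveI := hsfin.fintype
  have hcards : d ^ 2 - 1 ≤ Fintype.card s := by
    have h1 : Module.finrank ℝ (Submodule.span ℝ s) = s.toFinset.card :=
      finrank_span_set_eq_card hs_li
    rw [hs_span] at h1
    rw [Set.toFinset_card] at h1
    rw [← h1]
    exact hfinrank
  obtain ⟨e⟩ : Nonempty (Fin (d ^ 2 - 1) ↪ s) :=
    Function.Embedding.nonempty_of_card_le (by simpa using hcards)
  have hli : LinearIndependent ℝ (fun j : Fin (d ^ 2 - 1) => ((e j : Matrix (Fin d) (Fin d) ℂ))) :=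
    hs_li.comp e e.injective
  have hUex : ∀ j : Fin (d ^ 2 - 1), ∃ U : Matrix.unitaryGroup (Fin d) ℂ,
      f U = (e j : Matrix (Fin d) (Fin d) ℂ) := fun j => hs_sub (e j).2
  choose U hU using hUex
  refine ⟨U, ?_⟩
  have : (fun j : Fin (d ^ 2 - 1) =>
      (U j : Matrix (Fin d) (Fin d) ℂ) * H₀ * star (U j : Matrix (Fin d) (Fin d) ℂ)) =
      fun j => ((e j : Matrix (Fin d) (Fin d) ℂ)) := funext fun j => hU j
  rw [show (fun j : Fin (d ^ 2 - 1) =>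
      (U j : Matrix (Fin d) (Fin d) ℂ) * (H - (H.trace / d) • 1) *
        star (U j : Matrix (Fin d) (Fin d) ℂ)) =
      fun j => ((e j : Matrix (Fin d) (Fin d) ℂ)) from this]
  exact hli
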